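/- Let T be a plane tree with n nodes and let (Q_i^b(T))_{i=0}^n be the breadth-first-search queue process: Q_0 = 1 and Q_i = Q_{i-1} - 1 + c_{u_i} where u_1,...,u_n is the BFS order of the nodes and c_{u_i} is the number of children of u_i. Then the width of T satisfies w(T) ≤ max_{0 ≤ i ≤ n} Q_i^b(T) ≤ 2·w(T), where w(T) = max_k Z_k(T) and Z_k(T) is the number of nodes at depth k. -/

import Mathlib

/-- A plane (rooted ordered) tree: a root together with an ordered list of subtrees. -/
inductive PlaneTree where
  | node : List PlaneTree → PlaneTree

namespace PlaneTree

/-- Number of nodes. -/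
def size : PlaneTree → ℕ
  | node l => 1 + (l.attach.map fun t => size t.1).sum
decreasing_by simp only [PlaneTree.node.sizeOf_spec]; have := List.sizeOf_lt_of_mem t.2; omega

/-- The multiset of the numbers of children of the nodes of a plane tree. -/
def childCounts : PlaneTree → Multiset ℕ
  | node l => l.length ::ₘ (l.attach.map fun t => childCounts t.1).sum
decreasing_by simp only [PlaneTree.node.sizeOf_spec]; have := List.sizeOf_lt_of_mem t.2; omega

/-- Number of nodes at depth `k`. -/
def nodesAt : ℕ → PlaneTree → ℕ
  | 0, _ => 1
  | k + 1, node l => (l.map (nodesAt k)).sum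

/-- Width: maximum number of nodes at any single depth. -/
noncomputable def width (T : PlaneTree) : ℕ := sSup (Set.range fun k => nodesAt k T)

/-- Height: greatest depth of any node. -/
noncomputable def height (T : PlaneTree) : ℕ := sSup {k | nodesAt k T ≠ 0}

/-- `T` has child sequence `c` iff the multiset of child-counts of its nodes is
the multiset of entries of `c`. -/
def hasChildSeq {n : ℕ} (c : Fin n → ℕ) (T : PlaneTree) : Prop :=
  childCounts T = Multiset.map c Finset.univ.val


/-- The sequence of child-counts of the nodes of a forest, in breadth-first
search order (children are appended to the back of the queue of pending
subtrees). -/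
def bfsSeq : List PlaneTree → List ℕ
  | [] => []
  | node l :: ts => l.length :: bfsSeq (ts ++ l)
termination_by l => (l.map size).sum
decreasing_by
  simp only [List.map_append, List.sum_append, List.map_cons, List.sum_cons, size]
  have : (l.attach.map fun t => size t.1).sum = (l.map size).sum := by
    congr 1; simp [List.attach_map_val]
  omega

/-- The queue process associated to an exploration child-count sequence `s`:
`Q_0 = 1`, `Q_i = Q_{i-1} - 1 + s_i`. -/
def queue (s : List ℕ) (i : ℕ) : ℤ := 1 + ∑ j ∈ Finset.range i, ((s.getD j 1 : ℤ) - 1)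

/-! ### Auxiliary definitions -/

def children : PlaneTree → List PlaneTree
  | node l => l

def tsize (F : List PlaneTree) : ℕ := (F.map size).sum

def step : List PlaneTree → List PlaneTree
  | [] => []
  | t :: ts => ts ++ children t

def childrenF (F : List PlaneTree) : List PlaneTree := (F.map children).flatten

def level : ℕ → List PlaneTree → List PlaneTree
  | 0, F => F
  | k + 1, F => childrenF (level k F)

def cum (F : List PlaneTree) : ℕ → ℕ
  | 0 => 0
  | k + 1 => cum F k + (level k F).length

/-! ### Basic lemmas -/

lemma size_node (l : List PlaneTree) : size (node l) = 1 + (l.map size).sum := by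
  rw [size]; congr 1; simp [List.attach_map_val]

lemma one_le_size (T : PlaneTree) : 1 ≤ size T := by
  cases T with | node l => rw [size_node]; omega

lemma bfsSeq_nil : bfsSeq [] = [] := by rw [bfsSeq]

lemma bfsSeq_cons (l ts) : bfsSeq (node l :: ts) = l.length :: bfsSeq (ts ++ l) := by
  rw [bfsSeq]

lemma step_cons (t ts) : step (t :: ts) = ts ++ children t := rfl

lemma bfsSeq_step (F : List PlaneTree) : bfsSeq (step F) = (bfsSeq F).tail := by
  match F with
  | [] => simp [step, bfsSeq_nil]
  | node l :: ts => rw [bfsSeq_cons]; rfl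

lemma bfsSeq_step_iter (i : ℕ) (F : List PlaneTree) :
    bfsSeq (step^[i] F) = (bfsSeq F).drop i := by
  induction i generalizing F with
  | zero => simp
  | succ i ih =>
    rw [Function.iterate_succ_apply, ih, bfsSeq_step, ← List.drop_one,
      List.drop_drop, Nat.add_comm]

lemma tsize_cons (t ts) : tsize (t :: ts) = size t + tsize ts := by
  simp [tsize]

lemma tsize_append (F G : List PlaneTree) : tsize (F ++ G) = tsize F + tsize G := by
  simp [tsize]

lemma tsize_children (t : PlaneTree) : size t = 1 + tsize (children t) := by
  cases t with | node l => rw [size_node]; rfl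

lemma tsize_step (F : List PlaneTree) (h : F ≠ []) : tsize (step F) + 1 = tsize F := by
  match F with
  | t :: ts =>
    rw [step_cons, tsize_append, tsize_cons, tsize_children t]; ring

lemma tsize_eq_zero {G : List PlaneTree} (h : tsize G = 0) : G = [] := by
  match G with
  | [] => rfl
  | t :: ts => rw [tsize_cons] at h; have := one_le_size t; omega

lemma length_bfsSeq (F : List PlaneTree) : (bfsSeq F).length = tsize F := by
  generalize h : tsize F = n
  induction n using Nat.strong_induction_on generalizing F with
  | _ n ih =>
    match F with
    | [] => rw [bfsSeq_nil]; rw [show tsize [] = 0 from rfl] at h; simp [← h]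
    | node l :: ts =>
      rw [bfsSeq_cons, List.length_cons]
      have hs := tsize_step (node l :: ts) (by simp)
      rw [show step (node l :: ts) = ts ++ l from rfl] at hs
      rw [ih (tsize (ts ++ l)) (by omega) _ rfl]
      omega

lemma step_iter_ne_nil {F : List PlaneTree} {j : ℕ} (h : j < tsize F) :
    step^[j] F ≠ [] ∧ tsize (step^[j] F) = tsize F - j := by
  induction j with
  | zero =>
    refine ⟨?_, rfl⟩
    intro hF
    simp only [Function.iterate_zero_apply] at hF
    rw [hF] at h; simp [tsize] at h
  | succ j ih =>
    have hj : j < tsize F := by omega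
    obtain ⟨hne, hts⟩ := ih hj
    have h1 := tsize_step _ hne
    rw [Function.iterate_succ_apply']
    constructor
    · intro hF
      rw [hF] at h1
      rw [show tsize [] = 0 from rfl] at h1
      omega
    · omega

lemma step_iter_nil (m : ℕ) : step^[m] ([] : List PlaneTree) = [] := by
  induction m with
  | zero => rfl
  | succ m ih => rw [Function.iterate_succ_apply', ih]; rfl

lemma step_iter_tsize_nil (F : List PlaneTree) : step^[tsize F] F = [] := by
  rcases Nat.eq_zero_or_pos (tsize F) with h | h
  · rw [h, Function.iterate_zero_apply]; exact tsize_eq_zero h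
  · have hlt : tsize F - 1 < tsize F := by omega
    obtain ⟨hne, hts⟩ := step_iter_ne_nil hlt
    have h1 := tsize_step _ hne
    have : tsize F = (tsize F - 1) + 1 := by omega
    rw [this, Function.iterate_succ_apply']
    apply tsize_eq_zero
    omega

lemma lt_tsize_of_ne {F : List PlaneTree} {j : ℕ} (h : step^[j] F ≠ []) :
    j < tsize F := by
  by_contra hc
  push_neg at hc
  apply h
  have : j = (j - tsize F) + tsize F := by omega
  rw [this, Function.iterate_add_apply, step_iter_tsize_nil, step_iter_nil]


/-! ### Levels -/

lemma childrenF_append (F G : List PlaneTree) :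
    childrenF (F ++ G) = childrenF F ++ childrenF G := by
  simp [childrenF]

lemma step_iter_take {F : List PlaneTree} {m : ℕ} (h : m ≤ F.length) :
    step^[m] F = F.drop m ++ childrenF (F.take m) := by
  induction m with
  | zero => simp [childrenF]
  | succ m ih =>
    have hm : m ≤ F.length := by omega
    rw [Function.iterate_succ_apply', ih hm]
    have hlt : m < F.length := h
    rw [List.drop_eq_getElem_cons hlt, List.cons_append, step_cons, List.take_succ,
      List.getElem?_eq_getElem hlt, childrenF_append, List.append_assoc]
    congr 1
    simp [childrenF]

lemma step_cum (F : List PlaneTree) (k : ℕ) : step^[cum F k] F = level k F := by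
  induction k with
  | zero => rfl
  | succ k ih =>
    rw [show cum F (k + 1) = (level k F).length + cum F k from Nat.add_comm _ _,
      Function.iterate_add_apply, ih, step_iter_take (le_refl _)]
    simp [level]

lemma step_cum_add {F : List PlaneTree} {k r : ℕ} (h : r ≤ (level k F).length) :
    step^[cum F k + r] F = (level k F).drop r ++ childrenF ((level k F).take r) := by
  rw [Nat.add_comm, Function.iterate_add_apply, step_cum, step_iter_take h]

lemma level_length (k : ℕ) (F : List PlaneTree) :
    (level k F).length = (F.map (nodesAt k)).sum := by
  induction k generalizing F with
  | zero => simp [level, nodesAt]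
  | succ k ih =>
    have hcomm : ∀ j (G : List PlaneTree), level (j + 1) G = level j (childrenF G) := by
      intro j
      induction j with
      | zero => intro G; rfl
      | succ j ihj =>
        intro G
        calc level (j + 2) G = childrenF (level (j + 1) G) := rfl
          _ = childrenF (level j (childrenF G)) := by rw [ihj]
          _ = level (j + 1) (childrenF G) := rfl
    rw [hcomm, ih]
    simp only [childrenF, List.map_flatten, List.sum_flatten, List.map_map]
    congr 1
    apply List.map_congr_left
    intro t _
    cases t with
    | node l => simp [children, nodesAt]

lemma nodesAt_le_size (k : ℕ) (T : PlaneTree) : nodesAt k T ≤ size T := by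
  induction k generalizing T with
  | zero => exact one_le_size T
  | succ k ih =>
    cases T with
    | node l =>
      rw [show nodesAt (k+1) (node l) = (l.map (nodesAt k)).sum from rfl, size_node]
      have : (l.map (nodesAt k)).sum ≤ (l.map size).sum :=
        List.sum_le_sum (fun t _ => ih t)
      omega

lemma nodesAt_le_width (k : ℕ) (T : PlaneTree) : nodesAt k T ≤ width T := by
  apply le_csSup
  · exact ⟨size T, by rintro x ⟨j, rfl⟩; exact nodesAt_le_size j T⟩
  · exact ⟨k, rfl⟩

lemma exists_width (T : PlaneTree) : ∃ k, nodesAt k T = width T := by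
  have h : width T ∈ Set.range fun k => nodesAt k T := by
    apply Nat.sSup_mem (Set.range_nonempty _)
    exact ⟨size T, by rintro x ⟨j, rfl⟩; exact nodesAt_le_size j T⟩
  obtain ⟨k, hk⟩ := h
  exact ⟨k, hk⟩

lemma one_le_width (T : PlaneTree) : 1 ≤ width T := by
  have := nodesAt_le_width 0 T
  simpa [nodesAt] using this

/-! ### Queue = length of state -/

lemma queue_eq_length {F : List PlaneTree} {i : ℕ} (h : i ≤ tsize F) :
    (F.length : ℤ) + ∑ j ∈ Finset.range i, (((bfsSeq F).getD j 1 : ℤ) - 1)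
      = ((step^[i] F).length : ℤ) := by
  induction i with
  | zero => simp
  | succ i ih =>
    have hi : i ≤ tsize F := by omega
    have hlt : i < tsize F := h
    obtain ⟨hne, -⟩ := step_iter_ne_nil hlt
    rw [Finset.sum_range_succ, ← add_assoc, ih hi]
    obtain ⟨t, ts, hst⟩ := List.exists_cons_of_ne_nil hne
    have hdrop : (bfsSeq F).drop i = (children t).length :: bfsSeq (ts ++ children t) := by
      rw [← bfsSeq_step_iter, hst]
      cases t with
      | node l => exact bfsSeq_cons l ts
    have hgetD : (bfsSeq F).getD i 1 = (children t).length := by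
      have h2 := List.head?_drop (l := bfsSeq F) (i := i)
      rw [hdrop] at h2
      simp [List.getD, ← h2]
    rw [hgetD, Function.iterate_succ_apply', hst, step_cons]
    simp

/-! ### The exploration interval -/

lemma cum_cover {F : List PlaneTree} {i : ℕ} (h : i ≤ tsize F) :
    ∃ k, cum F k ≤ i ∧ i ≤ cum F (k + 1) := by
  induction i with
  | zero => exact ⟨0, le_refl _, Nat.zero_le _⟩
  | succ i ih =>
    obtain ⟨k, h1, h2⟩ := ih (by omega)
    rcases Nat.lt_or_ge i (cum F (k + 1)) with hlt | hge
    · exact ⟨k, by omega, by omega⟩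
    · have heq : i = cum F (k + 1) := by omega
      refine ⟨k + 1, by omega, ?_⟩
      rw [show cum F (k + 2) = cum F (k + 1) + (level (k + 1) F).length from rfl]
      have : level (k + 1) F ≠ [] := by
        rw [← step_cum]
        apply (step_iter_ne_nil _).1
        omega
      have : (level (k + 1) F).length ≠ 0 := by simpa using this
      omega

end PlaneTree

open PlaneTree in
/-- The BFS queue process of a plane tree `T` dominates the width and is at
most twice the width: `w(T) ≤ max_{0 ≤ i ≤ n} Q_i^b(T) ≤ 2·w(T)`. -/
theorem stmt12 (T : PlaneTree) :
    (∃ i ≤ T.size, (T.width : ℤ) ≤ queue (bfsSeq [T]) i) ∧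
      ∀ i ≤ T.size, queue (bfsSeq [T]) i ≤ 2 * T.width := by
  have htsize : tsize [T] = T.size := by simp [tsize]
  have hq : ∀ i ≤ T.size, queue (bfsSeq [T]) i = ((step^[i] [T]).length : ℤ) := by
    intro i hi
    have h2 := queue_eq_length (F := [T]) (i := i) (by omega)
    simpa [queue] using h2
  constructor
  · obtain ⟨k, hk⟩ := exists_width T
    have hlen : (level k [T]).length = nodesAt k T := by
      rw [level_length]; simp
    have hne : level k [T] ≠ [] := by
      intro h0
      rw [h0] at hlen
      have := one_le_width T
      simp at hlen
      omega
    have hcum : cum [T] k < tsize [T] := by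
      apply lt_tsize_of_ne
      rw [step_cum]
      exact hne
    refine ⟨cum [T] k, by omega, ?_⟩
    rw [hq _ (by omega), step_cum, hlen, hk]
  · intro i hi
    rw [hq i hi]
    obtain ⟨k, h1, h2⟩ := cum_cover (F := [T]) (i := i) (by omega)
    have hck : cum [T] (k + 1) = cum [T] k + (level k [T]).length := rfl
    set r := i - cum [T] k with hr
    have hrle : r ≤ (level k [T]).length := by omega
    have hi' : i = cum [T] k + r := by omega
    rw [hi', step_cum_add hrle]
    have hb1 : ((level k [T]).drop r).length ≤ (level k [T]).length := by simp
    have hb2 : (childrenF ((level k [T]).take r)).length ≤ (level (k + 1) [T]).length := by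
      have hx : level (k + 1) [T]
          = childrenF ((level k [T]).take r ++ (level k [T]).drop r) := by
        rw [List.take_append_drop]; rfl
      rw [hx, childrenF_append]
      simp
    have hw1 : (level k [T]).length ≤ T.width := by
      rw [level_length]; simpa using nodesAt_le_width k T
    have hw2 : (level (k + 1) [T]).length ≤ T.width := by
      rw [level_length]; simpa using nodesAt_le_width (k + 1) T
    rw [List.length_append]
    push_cast
    omega
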